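/- Fix α ∈ (0,1). There is a constant K_α > 0 such that for all natural numbers k, M ≥ 10 with k ≤ (log M)^α / (log log M)^3, one has ∑_{m ≤ M, Ω(m) > (log M)^α} τ_k(m) ≤ K_α · M · exp( −(log M)^α / (4 log log M) ). -/

import Mathlib

open Finset

/-- The `k`-fold divisor function `τ_k(n)`: the number of `k`-tuples
`(a_1, …, a_k)` of positive integers with `a_1 ⋯ a_k = n`. -/
def tauk (k n : ℕ) : ℕ :=
  ((Fintype.piFinset fun _ : Fin k => Finset.Icc 1 n).filter fun f => ∏ i, f i = n).card

/-- `Ω(n)`: the number of prime factors of `n` counted with multiplicity. -/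
def bigOmega (n : ℕ) : ℕ := n.primeFactorsList.length

lemma bigOmega_mul {m n : ℕ} (hm : m ≠ 0) (hn : n ≠ 0) :
    bigOmega (m * n) = bigOmega m + bigOmega n := by
  have := ArithmeticFunction.cardFactors_mul hm hn
  simpa [bigOmega, ArithmeticFunction.cardFactors_apply] using this

lemma bigOmega_prime {p : ℕ} (hp : p.Prime) : bigOmega p = 1 := by
  simp [bigOmega, Nat.primeFactorsList_prime hp]

/-- weight function as a monoid hom -/
noncomputable def wf : ℕ →* ℝ where
  toFun n := (3/2 : ℝ) ^ (bigOmega n) / n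
  map_one' := by simp [bigOmega]
  map_mul' m n := by
    rcases eq_or_ne m 0 with rfl | hm
    · simp [bigOmega]
    rcases eq_or_ne n 0 with rfl | hn
    · simp [bigOmega]
    show (3/2:ℝ) ^ (bigOmega (m*n)) / (↑(m*n)) = _
    rw [bigOmega_mul hm hn, pow_add]
    push_cast
    field_simp

lemma wf_nonneg (n : ℕ) : 0 ≤ wf n := by
  unfold wf
  simp only [MonoidHom.coe_mk, OneHom.coe_mk]
  positivity

lemma wf_prime {p : ℕ} (hp : p.Prime) : wf p = 3/2 / (p:ℝ) := by
  unfold wf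
  simp [bigOmega_prime hp]

lemma wf_apply (n : ℕ) : wf n = (3/2:ℝ)^(bigOmega n) / n := rfl

lemma wf_lt_one {p : ℕ} (hp : p.Prime) : ‖wf p‖ < 1 := by
  rw [wf_prime hp, Real.norm_eq_abs, abs_of_nonneg (by positivity)]
  rw [div_lt_one (by exact_mod_cast hp.pos)]
  have : (2:ℝ) ≤ p := by exact_mod_cast hp.two_le
  linarith

lemma factor_le {p : ℕ} (hp : p.Prime) : (1 - wf p)⁻¹ ≤ Real.exp (3 / p) := by
  rw [wf_prime hp]
  have hp2 : (2:ℝ) ≤ p := by exact_mod_cast hp.two_le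
  have hppos : (0:ℝ) < p := by linarith
  rcases eq_or_lt_of_le hp2 with h2 | h3
  · -- p = 2
    rw [← h2]
    have h4 : (1 - 3/2/(2:ℝ))⁻¹ = 4 := by norm_num
    rw [h4]
    have he1 : (2.7182818283 : ℝ) < Real.exp 1 := Real.exp_one_gt_d9
    have he2 : (1/2 : ℝ) + 1 ≤ Real.exp (1/2) := Real.add_one_le_exp _
    have : Real.exp (3/(2:ℝ)) = Real.exp 1 * Real.exp (1/2) := by
      rw [← Real.exp_add]; norm_num
    rw [this]
    nlinarith [Real.exp_pos (1/2 : ℝ)]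
  · -- p ≥ 3
    have hp3 : (3:ℝ) ≤ p := by
      have : 2 < p := by exact_mod_cast h3
      have : 3 ≤ p := by omega
      exact_mod_cast this
    set x : ℝ := 3/2/(p:ℝ) with hx
    have hx0 : 0 < x := by positivity
    have hxh : x ≤ 1/2 := by rw [hx, div_le_div_iff₀ (by positivity) (by norm_num)]; linarith
    have h1x : 0 < 1 - x := by linarith
    have step1 : (1 - x)⁻¹ ≤ 1 + 2*x := by
      rw [inv_le_iff_one_le_mul₀ h1x]
      nlinarith
    have step2 : 1 + 2*x ≤ Real.exp (2*x) := by
      have := Real.add_one_le_exp (2*x); linarith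
    have : (2:ℝ)*x = 3/p := by rw [hx]; field_simp
    calc (1-x)⁻¹ ≤ 1 + 2*x := step1
      _ ≤ Real.exp (2*x) := step2
      _ = Real.exp (3/p) := by rw [this]

lemma E_le (M : ℕ) :
    ∑ n ∈ Icc 1 M, wf n ≤ Real.exp (3 * ∑ p ∈ (M+1).primesBelow, (1/p : ℝ)) := by
  have key := EulerProduct.summable_and_hasSum_smoothNumbers_prod_primesBelow_geometric
    (f := wf) (fun {p} hp => wf_lt_one hp) (M+1)
  have hsum : Summable (fun m : (M+1).smoothNumbers => wf m) := key.2.summable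
  have hind : Summable (Set.indicator ((M+1).smoothNumbers : Set ℕ) wf) := by
    rwa [← summable_subtype_iff_indicator]
  have h1 : ∑ n ∈ Icc 1 M, wf n
      = ∑ n ∈ Icc 1 M, Set.indicator ((M+1).smoothNumbers : Set ℕ) wf n := by
    refine Finset.sum_congr rfl fun n hn => ?_
    rw [Set.indicator_of_mem]
    rw [Finset.mem_Icc] at hn
    refine Nat.mem_smoothNumbers.mpr ⟨by omega, fun p hp => ?_⟩
    have hdvd := Nat.dvd_of_mem_primeFactorsList hp
    have := Nat.le_of_dvd (by omega) hdvd
    omega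
  have h2 : ∑ n ∈ Icc 1 M, Set.indicator ((M+1).smoothNumbers : Set ℕ) wf n
      ≤ ∑' n, Set.indicator ((M+1).smoothNumbers : Set ℕ) wf n := by
    refine Summable.sum_le_tsum _ (fun n _ => ?_) hind
    exact Set.indicator_nonneg (fun m _ => wf_nonneg m) n
  have h3 : ∑' n, Set.indicator ((M+1).smoothNumbers : Set ℕ) wf n
      = ∏ p ∈ (M+1).primesBelow, (1 - wf p)⁻¹ := by
    rw [← _root_.tsum_subtype]
    exact key.2.tsum_eq
  have h4 : ∏ p ∈ (M+1).primesBelow, (1 - wf p)⁻¹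
      ≤ ∏ p ∈ (M+1).primesBelow, Real.exp (3 / p) := by
    refine Finset.prod_le_prod (fun p hp => ?_) (fun p hp => ?_)
    · have hp' := Nat.prime_of_mem_primesBelow hp
      have := wf_lt_one hp'
      rw [Real.norm_eq_abs, abs_lt] at this
      have : 0 < 1 - wf p := by linarith [this.2]
      positivity
    · exact factor_le (Nat.prime_of_mem_primesBelow hp)
  have h5 : ∏ p ∈ (M+1).primesBelow, Real.exp (3/(p:ℝ))
      = Real.exp (3 * ∑ p ∈ (M+1).primesBelow, (1/p : ℝ)) := by
    rw [← Real.exp_sum, Finset.mul_sum]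
    congr 1
    refine Finset.sum_congr rfl fun p _ => by ring
  calc ∑ n ∈ Icc 1 M, wf n = _ := h1
    _ ≤ _ := h2
    _ = _ := h3
    _ ≤ _ := h4
    _ = _ := h5

lemma logM_ge {M : ℕ} (hM : 10 ≤ M) : (2.25:ℝ) ≤ Real.log M := by
  have h10 : (10:ℝ) ≤ M := by exact_mod_cast hM
  have key : (2.25:ℝ) ≤ Real.log 10 := by
    rw [Real.le_log_iff_exp_le (by norm_num)]
    have he : Real.exp 2.25 = Real.exp 1 * Real.exp 1 * Real.exp 0.25 := by
      rw [← Real.exp_add, ← Real.exp_add]; norm_num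
    have h1 : Real.exp 1 < 2.7182818286 := Real.exp_one_lt_d9
    have h2 : Real.exp 0.25 < 4/3 := by
      have hn := Real.add_one_lt_exp (x := -0.25) (by norm_num)
      rw [Real.exp_neg] at hn
      have hp := Real.exp_pos (0.25:ℝ)
      rw [show (-0.25 + 1 : ℝ) = 0.75 by norm_num] at hn
      rw [lt_inv_comm₀ (by norm_num) hp] at hn
      linarith
    nlinarith [Real.exp_pos (1:ℝ), Real.exp_pos (0.25:ℝ)]
  calc (2.25:ℝ) ≤ Real.log 10 := key
    _ ≤ Real.log M := Real.log_le_log (by norm_num) h10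

-- harmonic sum bound
lemma harmonic_le : ∀ J : ℕ, 1 ≤ J → ∑ j ∈ Icc 1 J, (1/j : ℝ) ≤ 1 + Real.log J := by
  intro J
  induction J with
  | zero => intro h; omega
  | succ J ih =>
    intro _
    rcases Nat.eq_zero_or_pos J with h1 | h1
    · subst h1; norm_num
    have hJ1 : 1 ≤ J := by omega
    have hJpos : (0:ℝ) < J := by exact_mod_cast hJ1
    rw [Finset.sum_Icc_succ_top (by omega)]
    have key : Real.log J + 1/(J+1) ≤ Real.log (J+1) := by
      have hx : (0:ℝ) < (J:ℝ)/(J+1) := by positivity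
      have := Real.log_le_sub_one_of_pos hx
      rw [Real.log_div (ne_of_gt hJpos) (by positivity)] at this
      have h2 : (J:ℝ)/(J+1) - 1 = -(1/(J+1)) := by field_simp; ring
      rw [h2] at this
      linarith
    have := ih hJ1
    push_cast
    push_cast at this key
    linarith

-- prime count in dyadic block
lemma block_count (j : ℕ) :
    j * ((Finset.range (2^(j+1))).filter (fun p => p.Prime ∧ 2^j ≤ p)).card ≤ 2^(j+2) := by
  set s := (Finset.range (2^(j+1))).filter (fun p => p.Prime ∧ 2^j ≤ p) with hs
  have h1 : (2^j)^(s.card) ≤ ∏ p ∈ s, p := by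
    refine Finset.pow_card_le_prod s _ _ (fun x hx => ?_)
    rw [hs, Finset.mem_filter] at hx
    exact hx.2.2
  have h2 : ∏ p ∈ s, p ≤ ∏ p ∈ (Finset.range (2^(j+1))).filter Nat.Prime, p := by
    refine Finset.prod_le_prod_of_subset_of_one_le' ?_ (fun i hi _ => ?_)
    · intro x hx
      rw [hs, Finset.mem_filter] at hx
      rw [Finset.mem_filter]
      exact ⟨hx.1, hx.2.1⟩
    · exact ((Finset.mem_filter.mp hi).2).one_lt.le
  have h3 : ∏ p ∈ (Finset.range (2^(j+1))).filter Nat.Prime, p ≤ 2^(2^(j+2)) := by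
    have e1 : 2^(j+1) = (2^(j+1) - 1) + 1 := by
      have : 1 ≤ 2^(j+1) := Nat.one_le_two_pow
      omega
    calc ∏ p ∈ (Finset.range (2^(j+1))).filter Nat.Prime, p
        = primorial (2^(j+1) - 1) := by rw [primorial, ← e1]
      _ ≤ 4^(2^(j+1) - 1) := primorial_le_4_pow _
      _ ≤ 4^(2^(j+1)) := Nat.pow_le_pow_right (by norm_num) (by omega)
      _ = 2^(2^(j+2)) := by
          rw [show (4:ℕ) = 2^2 by norm_num, ← pow_mul, pow_succ]
          ring_nf
  have h4 : (2:ℕ)^(j * s.card) ≤ 2^(2^(j+2)) := by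
    rw [pow_mul]; exact le_trans h1 (le_trans h2 h3)
  exact (Nat.pow_le_pow_iff_right (by norm_num)).mp h4

lemma mertens {M : ℕ} (hM : 10 ≤ M) :
    ∑ p ∈ (M+1).primesBelow, (1/p : ℝ) ≤ 4 * Real.log (Real.log M) + 7 := by
  set J := Nat.log 2 M with hJ
  have hJ3 : 3 ≤ J := by
    rw [hJ]
    have h8 : Nat.log 2 8 ≤ Nat.log 2 M := Nat.log_mono_right (by omega)
    have : Nat.log 2 8 = 3 := Nat.log_eq_of_pow_le_of_lt_pow (by norm_num) (by norm_num)
    omega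
  -- fiberwise
  have maps : ∀ p ∈ (M+1).primesBelow, Nat.log 2 p ∈ Icc 1 J := by
    intro p hp
    have hp' := Nat.prime_of_mem_primesBelow hp
    have hlt := Nat.lt_of_mem_primesBelow hp
    rw [Finset.mem_Icc]
    constructor
    · exact Nat.log_pos (by norm_num) hp'.two_le
    · exact Nat.log_mono_right (by omega)
  rw [← Finset.sum_fiberwise_of_maps_to maps]
  have step : ∀ j ∈ Icc 1 J,
      (∑ p ∈ (M+1).primesBelow with Nat.log 2 p = j, (1/p : ℝ)) ≤ 4 / j := by
    intro j hj
    rw [Finset.mem_Icc] at hj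
    set s := (Finset.range (2^(j+1))).filter (fun p => p.Prime ∧ 2^j ≤ p) with hs
    have hsub : ((M+1).primesBelow.filter (fun p => Nat.log 2 p = j)) ⊆ s := by
      intro p hp
      rw [Finset.mem_filter] at hp
      have hp' := Nat.prime_of_mem_primesBelow hp.1
      rw [hs, Finset.mem_filter, Finset.mem_range]
      refine ⟨?_, hp', ?_⟩
      · have := Nat.lt_pow_succ_log_self (by norm_num : 1 < 2) p
        rwa [hp.2] at this
      · have := Nat.pow_log_le_self 2 (Nat.Prime.ne_zero hp')
        rwa [hp.2] at this
    have hterm : ∀ p ∈ (M+1).primesBelow.filter (fun p => Nat.log 2 p = j),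
        (1/p : ℝ) ≤ ((2:ℝ)^j)⁻¹ := by
      intro p hp
      rw [Finset.mem_filter] at hp
      have hp' := Nat.prime_of_mem_primesBelow hp.1
      have h2j : (2:ℝ)^j ≤ p := by
        have := Nat.pow_log_le_self 2 (Nat.Prime.ne_zero hp')
        rw [hp.2] at this
        exact_mod_cast this
      rw [one_div]
      exact inv_anti₀ (by positivity) h2j
    calc ∑ p ∈ (M+1).primesBelow with Nat.log 2 p = j, (1/p : ℝ)
        ≤ ∑ _p ∈ (M+1).primesBelow.filter (fun p => Nat.log 2 p = j), ((2:ℝ)^j)⁻¹ :=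
          Finset.sum_le_sum hterm
      _ = ((M+1).primesBelow.filter (fun p => Nat.log 2 p = j)).card * ((2:ℝ)^j)⁻¹ := by
          rw [Finset.sum_const, nsmul_eq_mul]
      _ ≤ s.card * ((2:ℝ)^j)⁻¹ := by
          have := Finset.card_le_card hsub
          have h2 : (0:ℝ) < ((2:ℝ)^j)⁻¹ := by positivity
          have : (((M+1).primesBelow.filter (fun p => Nat.log 2 p = j)).card : ℝ) ≤ (s.card : ℝ) := by
            exact_mod_cast this
          nlinarith
      _ ≤ 4 / j := by
          have hc := block_count j
          have hjpos : (0:ℝ) < j := by exact_mod_cast hj.1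
          have hcR : (j:ℝ) * s.card ≤ 2^(j+2) := by exact_mod_cast hc
          have h2j : (0:ℝ) < (2:ℝ)^j := by positivity
          rw [← div_eq_mul_inv, div_le_div_iff₀ h2j hjpos]
          have h4 : (2:ℝ)^(j+2) = 4 * 2^j := by ring
          nlinarith
  calc ∑ j ∈ Icc 1 J, ∑ p ∈ (M+1).primesBelow with Nat.log 2 p = j, (1/p:ℝ)
      ≤ ∑ j ∈ Icc 1 J, (4/j : ℝ) := Finset.sum_le_sum step
    _ = 4 * ∑ j ∈ Icc 1 J, (1/j : ℝ) := by rw [Finset.mul_sum]; exact Finset.sum_congr rfl fun j _ => by ring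
    _ ≤ 4 * (1 + Real.log J) := by
        have := harmonic_le J (by omega)
        linarith
    _ ≤ 4 * Real.log (Real.log M) + 7 := by
        have hlM := logM_ge hM
        have hMne : M ≠ 0 := by omega
        have hJle : (J:ℝ) * Real.log 2 ≤ Real.log M := by
          have h2 : ((2:ℕ)^J : ℝ) ≤ (M:ℝ) := by exact_mod_cast Nat.pow_log_le_self 2 hMne
          have h3 := Real.log_le_log (by positivity) h2
          rw [Real.log_pow] at h3
          simpa using h3
        have hl2 : (0.6931:ℝ) < Real.log 2 := by
          have := Real.log_two_gt_d9; linarith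
        have hl2' : Real.log 2 < 0.6932 := by
          have := Real.log_two_lt_d9; linarith
        have hJ2 : (J:ℝ) ≤ 2 * Real.log M := by
          have hJ0 : (0:ℝ) ≤ J := by positivity
          nlinarith
        have hJpos : (0:ℝ) < J := by
          have : (3:ℝ) ≤ J := by exact_mod_cast hJ3
          linarith
        have hlogJ : Real.log J ≤ Real.log 2 + Real.log (Real.log M) := by
          calc Real.log J ≤ Real.log (2 * Real.log M) := Real.log_le_log hJpos hJ2
            _ = Real.log 2 + Real.log (Real.log M) := Real.log_mul (by norm_num) (by linarith)
        linarith

lemma sum_tauk_eq (k M : ℕ) (P : ℕ → Prop) [DecidablePred P] :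
    ∑ m ∈ (Finset.Icc 1 M).filter P, tauk k m =
      (((Fintype.piFinset fun _ : Fin k => Finset.Icc 1 M)).filter
        (fun f => (∏ i, f i) ∈ (Finset.Icc 1 M).filter P)).card := by
  classical
  set S := (Finset.Icc 1 M).filter P with hS
  set F := ((Fintype.piFinset fun _ : Fin k => Finset.Icc 1 M)).filter
        (fun f => (∏ i, f i) ∈ S) with hF
  have hmaps : ∀ f ∈ F, (∏ i, f i) ∈ S := fun f hf => (Finset.mem_filter.mp hf).2
  rw [Finset.card_eq_sum_card_fiberwise hmaps]
  refine Finset.sum_congr rfl fun m hm => ?_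
  have hm' : m ∈ Finset.Icc 1 M := Finset.mem_filter.mp hm |>.1
  rw [Finset.mem_Icc] at hm'
  rw [tauk]
  congr 1
  ext f
  constructor
  · intro hf
    rw [Finset.mem_filter] at hf ⊢
    obtain ⟨hpi, hprod⟩ := hf
    rw [Fintype.mem_piFinset] at hpi
    refine ⟨?_, hprod⟩
    rw [hF, Finset.mem_filter]
    refine ⟨Fintype.mem_piFinset.mpr fun i => ?_, hprod ▸ hm⟩
    have h1 := Finset.mem_Icc.mp (hpi i)
    exact Finset.mem_Icc.mpr ⟨h1.1, le_trans h1.2 hm'.2⟩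
  · intro hf
    rw [Finset.mem_filter] at hf ⊢
    obtain ⟨hfF, hprod⟩ := hf
    rw [hF, Finset.mem_filter] at hfF
    obtain ⟨hpi, _⟩ := hfF
    rw [Fintype.mem_piFinset] at hpi
    refine ⟨Fintype.mem_piFinset.mpr fun i => ?_, hprod⟩
    have h1 := Finset.mem_Icc.mp (hpi i)
    have hdvd : f i ∣ m := hprod ▸ Finset.dvd_prod_of_mem f (Finset.mem_univ i)
    exact Finset.mem_Icc.mpr ⟨h1.1, Nat.le_of_dvd (by omega) hdvd⟩

lemma tauk_le (k m : ℕ) : tauk k m ≤ m ^ k := by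
  calc tauk k m ≤ (Fintype.piFinset fun _ : Fin k => Finset.Icc 1 m).card :=
        Finset.card_filter_le _ _
    _ = m ^ k := by
        rw [Fintype.card_piFinset]
        simp [Nat.card_Icc]


lemma card_weight (k M : ℕ) (L : ℝ) :
    ((((Fintype.piFinset fun _ : Fin k => Finset.Icc 1 M)).filter
        (fun f => (∏ i, f i) ∈ (Finset.Icc 1 M).filter (fun m => L < (bigOmega m : ℝ)))).card : ℝ)
      ≤ M * (3/2 : ℝ) ^ (-L) * (∑ n ∈ Finset.Icc 1 M, wf n) ^ k := by
  classical
  set F := (((Fintype.piFinset fun _ : Fin k => Finset.Icc 1 M)).filter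
        (fun f => (∏ i, f i) ∈ (Finset.Icc 1 M).filter (fun m => L < (bigOmega m : ℝ)))) with hF
  have hpoint : ∀ f ∈ F, (1:ℝ) ≤ (M:ℝ) * (3/2:ℝ)^(-L) * ∏ i, wf (f i) := by
    intro f hf
    rw [hF, Finset.mem_filter] at hf
    obtain ⟨hpi, hm⟩ := hf
    rw [Finset.mem_filter, Finset.mem_Icc] at hm
    obtain ⟨⟨hm1, hm2⟩, hL⟩ := hm
    have hprod : ∏ i, wf (f i) = wf (∏ i, f i) := (map_prod wf f Finset.univ).symm
    rw [hprod, wf_apply]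
    set m := ∏ i, f i with hmdef
    have hmpos : (0:ℝ) < m := by exact_mod_cast hm1
    have hMm : (1:ℝ) ≤ (M:ℝ)/m := by
      rw [le_div_iff₀ hmpos]
      rw [one_mul]
      exact_mod_cast hm2
    have hexp : (1:ℝ) ≤ (3/2:ℝ)^(-L) * (3/2:ℝ)^(bigOmega m) := by
      rw [← Real.rpow_natCast (3/2:ℝ) (bigOmega m), ← Real.rpow_add (by norm_num)]
      have h0 : (0:ℝ) ≤ -L + bigOmega m := by linarith
      calc (1:ℝ) = (3/2:ℝ)^(0:ℝ) := (Real.rpow_zero _).symm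
        _ ≤ _ := Real.rpow_le_rpow_of_exponent_le (by norm_num) h0
    calc (1:ℝ) ≤ ((M:ℝ)/m) * ((3/2:ℝ)^(-L) * (3/2:ℝ)^(bigOmega m)) := by nlinarith
      _ = M * (3/2:ℝ)^(-L) * ((3/2:ℝ)^(bigOmega m)/m) := by field_simp
  have h1 : (F.card : ℝ) = ∑ _f ∈ F, (1:ℝ) := by simp
  rw [h1]
  have h2 : ∑ _f ∈ F, (1:ℝ) ≤ ∑ f ∈ F, ((M:ℝ) * (3/2:ℝ)^(-L) * ∏ i, wf (f i)) :=
    Finset.sum_le_sum hpoint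
  have h3 : ∑ f ∈ F, ((M:ℝ) * (3/2:ℝ)^(-L) * ∏ i, wf (f i))
      ≤ ∑ f ∈ Fintype.piFinset (fun _ : Fin k => Finset.Icc 1 M),
          ((M:ℝ) * (3/2:ℝ)^(-L) * ∏ i, wf (f i)) := by
    refine Finset.sum_le_sum_of_subset_of_nonneg (Finset.filter_subset _ _) (fun f _ _ => ?_)
    have hp : (0:ℝ) ≤ ∏ i, wf (f i) := Finset.prod_nonneg (fun i _ => wf_nonneg _)
    have hr : (0:ℝ) ≤ (3/2:ℝ)^(-L) := Real.rpow_nonneg (by norm_num) _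
    positivity
  have h4 : ∑ f ∈ Fintype.piFinset (fun _ : Fin k => Finset.Icc 1 M),
          ((M:ℝ) * (3/2:ℝ)^(-L) * ∏ i, wf (f i))
      = (M:ℝ) * (3/2:ℝ)^(-L) * (∑ n ∈ Finset.Icc 1 M, wf n) ^ k := by
    rw [← Finset.mul_sum, ← Finset.prod_univ_sum]
    simp [Finset.prod_const]
  linarith

set_option maxHeartbeats 1000000 in
theorem sum_tauk_irregular (α : ℝ) (hα0 : 0 < α) (hα1 : α < 1) :
    ∃ Kα : ℝ, 0 < Kα ∧
      ∀ k M : ℕ, 10 ≤ k → 10 ≤ M →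
        (k : ℝ) ≤ Real.log M ^ α / Real.log (Real.log M) ^ (3 : ℕ) →
        ∑ m ∈ (Finset.Icc 1 M).filter
            (fun m => Real.log M ^ α < (bigOmega m : ℝ)), (tauk k m : ℝ) ≤
          Kα * M * Real.exp (-(Real.log M ^ α) / (4 * Real.log (Real.log M))) := by
  refine ⟨Real.exp (Real.exp 125), Real.exp_pos _, ?_⟩
  intro k M hk hM hkM
  have hMpos : (0:ℝ) < M := by positivity
  have hlM : (2.25:ℝ) ≤ Real.log M := logM_ge hM
  set L : ℝ := Real.log M ^ α with hLdef
  set X : ℝ := Real.log (Real.log M) with hXdef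
  have hXlb : (5/9:ℝ) ≤ X := by
    have h1 : Real.log 2.25 ≤ X := Real.log_le_log (by norm_num) hlM
    have h2 : (1:ℝ) - 1/2.25 ≤ Real.log 2.25 := by
      have h3 := Real.log_le_sub_one_of_pos (show (0:ℝ) < (2.25)⁻¹ by norm_num)
      rw [Real.log_inv] at h3
      linarith
    have : (1:ℝ) - 1/2.25 = 5/9 := by norm_num
    linarith
  have hXpos : (0:ℝ) < X := by linarith
  have hL1 : (1:ℝ) ≤ L := by
    have := Real.rpow_le_rpow_of_exponent_le (show (1:ℝ) ≤ Real.log M by linarith)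
      (le_of_lt hα0 : (0:ℝ) ≤ α)
    rwa [Real.rpow_zero] at this
  have hLlog : L ≤ Real.log M := by
    have := Real.rpow_le_rpow_of_exponent_le (show (1:ℝ) ≤ Real.log M by linarith)
      (le_of_lt hα1)
    rwa [Real.rpow_one] at this
  have hLpos : (0:ℝ) < L := by linarith
  have hkX : (k:ℝ) * X^3 ≤ L := by
    rw [div_eq_mul_inv] at hkM
    have hX3 : (0:ℝ) < X^3 := by positivity
    calc (k:ℝ) * X^3 ≤ (L * (X^3)⁻¹) * X^3 := by
          apply mul_le_mul_of_nonneg_right hkM (le_of_lt hX3)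
      _ = L := by field_simp
  -- rewrite the sum as a card
  have hcast : ∑ m ∈ (Finset.Icc 1 M).filter (fun m => L < (bigOmega m : ℝ)), (tauk k m : ℝ)
      = ((∑ m ∈ (Finset.Icc 1 M).filter (fun m => L < (bigOmega m : ℝ)), tauk k m : ℕ) : ℝ) := by
    push_cast; ring
  rw [hcast, sum_tauk_eq k M (fun m => L < (bigOmega m : ℝ))]
  rcases le_or_gt 60 X with hcase | hcase
  · -- large M
    have key := card_weight k M L
    have hE0 : (0:ℝ) ≤ ∑ n ∈ Icc 1 M, wf n := Finset.sum_nonneg fun n _ => wf_nonneg n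
    have hE : ∑ n ∈ Icc 1 M, wf n ≤ Real.exp (12 * X + 21) := by
      calc ∑ n ∈ Icc 1 M, wf n ≤ Real.exp (3 * ∑ p ∈ (M+1).primesBelow, (1/p:ℝ)) := E_le M
        _ ≤ Real.exp (12 * X + 21) := by
            have := mertens hM
            have h1 : ∑ p ∈ (M+1).primesBelow, (1/p:ℝ) ≥ 0 :=
              Finset.sum_nonneg fun p _ => by positivity
            apply Real.exp_le_exp.mpr
            rw [← hXdef] at this
            linarith
    have hEk : (∑ n ∈ Icc 1 M, wf n)^k ≤ Real.exp ((k:ℝ) * (12 * X + 21)) := by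
      calc (∑ n ∈ Icc 1 M, wf n)^k ≤ (Real.exp (12 * X + 21))^k :=
            pow_le_pow_left₀ hE0 hE k
        _ = Real.exp ((k:ℝ) * (12 * X + 21)) := by
            rw [← Real.exp_nat_mul]
    have hrpow : (3/2:ℝ)^(-L) = Real.exp (Real.log (3/2) * (-L)) := by
      rw [Real.rpow_def_of_pos (by norm_num)]
    -- key exponent inequality
    have hlog32 : (1/3:ℝ) ≤ Real.log (3/2) := by
      have h3 := Real.log_le_sub_one_of_pos (show (0:ℝ) < (3/2:ℝ)⁻¹ by norm_num)
      rw [Real.log_inv] at h3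
      norm_num at h3 ⊢
      linarith
    have hexpineq : (k:ℝ) * (12 * X + 21) + L/(4*X) ≤ L * Real.log (3/2) := by
      have c1 : (k:ℝ) * X ≤ L / X^2 := by
        rw [le_div_iff₀ (by positivity)]
        calc (k:ℝ) * X * X^2 = (k:ℝ) * X^3 := by ring
          _ ≤ L := hkX
      have c1' : L / X^2 ≤ L / 3600 := by
        apply div_le_div_of_nonneg_left (by linarith) (by norm_num) (by nlinarith)
      have c2 : (k:ℝ) ≤ L / 216000 := by
        rw [le_div_iff₀ (by norm_num)]
        calc (k:ℝ) * 216000 ≤ (k:ℝ) * X^3 := by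
              have hk0 : (0:ℝ) ≤ (k:ℝ) := by positivity
              have hX2 : (3600:ℝ) ≤ X^2 := by nlinarith
              have : (216000:ℝ) ≤ X^3 := by nlinarith
              nlinarith
          _ ≤ L := hkX
      have c3 : L/(4*X) ≤ L/240 := by
        apply div_le_div_of_nonneg_left (by linarith) (by norm_num) (by linarith)
      have hk0 : (0:ℝ) ≤ (k:ℝ) := by positivity
      calc (k:ℝ) * (12 * X + 21) + L/(4*X) = 12 * ((k:ℝ)*X) + 21 * (k:ℝ) + L/(4*X) := by ring
        _ ≤ 12 * (L/3600) + 21 * (L/216000) + L/240 := by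
            have := le_trans c1 c1'
            linarith
        _ ≤ (1/3) * L := by linarith
        _ ≤ L * Real.log (3/2) := by
            nlinarith [mul_le_mul_of_nonneg_left hlog32 (le_of_lt hLpos)]
    calc (((((Fintype.piFinset fun _ : Fin k => Finset.Icc 1 M)).filter
        (fun f => (∏ i, f i) ∈ (Finset.Icc 1 M).filter (fun m => L < (bigOmega m : ℝ)))).card : ℕ) : ℝ)
        ≤ M * (3/2:ℝ)^(-L) * (∑ n ∈ Icc 1 M, wf n)^k := key
      _ ≤ M * (3/2:ℝ)^(-L) * Real.exp ((k:ℝ) * (12*X+21)) := by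
          have hr : (0:ℝ) ≤ (3/2:ℝ)^(-L) := Real.rpow_nonneg (by norm_num) _
          have := mul_le_mul_of_nonneg_left hEk (by positivity : (0:ℝ) ≤ (M:ℝ) * (3/2:ℝ)^(-L))
          calc (M:ℝ) * (3/2:ℝ)^(-L) * (∑ n ∈ Icc 1 M, wf n)^k
              = (M:ℝ) * (3/2:ℝ)^(-L) * ((∑ n ∈ Icc 1 M, wf n)^k) := by ring
            _ ≤ (M:ℝ) * (3/2:ℝ)^(-L) * Real.exp ((k:ℝ)*(12*X+21)) := this
      _ = M * Real.exp (Real.log (3/2) * (-L) + (k:ℝ)*(12*X+21)) := by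
          rw [hrpow, mul_assoc, ← Real.exp_add]
      _ ≤ Real.exp (Real.exp 125) * M * Real.exp (-L / (4*X)) := by
          rw [mul_comm (Real.exp (Real.exp 125)) (M:ℝ), mul_assoc, ← Real.exp_add]
          apply mul_le_mul_of_nonneg_left _ (le_of_lt hMpos)
          apply Real.exp_le_exp.mpr
          have hexp125 : (0:ℝ) ≤ Real.exp 125 := le_of_lt (Real.exp_pos _)
          have : -L/(4*X) = -(L/(4*X)) := by ring
          rw [this]
          linarith
  · -- small M
    have htriv : ((∑ m ∈ (Finset.Icc 1 M).filter (fun m => L < (bigOmega m : ℝ)), tauk k m : ℕ) : ℝ)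
        ≤ (M:ℝ) * (M:ℝ)^k := by
      have h1 : ∑ m ∈ (Finset.Icc 1 M).filter (fun m => L < (bigOmega m : ℝ)), tauk k m
          ≤ ∑ m ∈ Finset.Icc 1 M, tauk k m :=
        Finset.sum_le_sum_of_subset (Finset.filter_subset _ _)
      have h2 : ∑ m ∈ Finset.Icc 1 M, tauk k m ≤ ∑ _m ∈ Finset.Icc 1 M, M^k := by
        refine Finset.sum_le_sum fun m hm => ?_
        rw [Finset.mem_Icc] at hm
        exact le_trans (tauk_le k m) (Nat.pow_le_pow_left hm.2 k)
      have h3 : ∑ _m ∈ Finset.Icc 1 M, M^k = M * M^k := by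
        rw [Finset.sum_const, Nat.card_Icc]
        simp [smul_eq_mul]
      have := le_trans h1 (le_trans h2 (le_of_eq h3))
      exact_mod_cast this
    rw [sum_tauk_eq k M (fun m => L < (bigOmega m : ℝ))] at htriv
    refine le_trans htriv ?_
    have hMk : (M:ℝ)^k = Real.exp ((k:ℝ) * Real.log M) := by
      rw [← Real.exp_log hMpos, ← Real.exp_nat_mul, Real.exp_log hMpos]
    have hlogMlt : Real.log M < Real.exp 60 := by
      rw [hXdef] at hcase
      have := (Real.log_lt_iff_lt_exp (by linarith : (0:ℝ) < Real.log M)).mp hcase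
      exact this
    have hexpkey : (k:ℝ) * Real.log M + L/(4*X) ≤ Real.exp 125 := by
      have hkle : (k:ℝ) ≤ 6 * Real.log M := by
        have hX2' : (25/81:ℝ) ≤ X^2 := by nlinarith
        have hX3 : (125/729:ℝ) ≤ X^3 := by nlinarith
        have : (k:ℝ) * (125/729) ≤ (k:ℝ) * X^3 := by
          have hk0 : (0:ℝ) ≤ (k:ℝ) := by positivity
          nlinarith
        have h5 : (k:ℝ) * (125/729) ≤ Real.log M := by linarith [le_trans this (le_trans hkX hLlog)]
        nlinarith
      have hL4X : L/(4*X) ≤ Real.log M := by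
        rw [div_le_iff₀ (by linarith : (0:ℝ) < 4*X)]
        nlinarith
      have he60 : (0:ℝ) < Real.exp 60 := Real.exp_pos _
      have hlMub : (0:ℝ) < Real.log M := by linarith
      have hsq : (k:ℝ) * Real.log M ≤ 6 * Real.exp 60 * Real.exp 60 := by nlinarith
      have hkey2 : Real.exp 125 = Real.exp 120 * Real.exp 5 := by
        rw [← Real.exp_add]; norm_num
      have he120 : Real.exp 120 = Real.exp 60 * Real.exp 60 := by
        rw [← Real.exp_add]; norm_num
      have hexp5 : (7:ℝ) ≤ Real.exp 5 := by
        have h1 : Real.exp 5 = (Real.exp 1)^5 := by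
          rw [← Real.exp_nat_mul]; norm_num
        have h2 : (2.7:ℝ) < Real.exp 1 := by
          have := Real.exp_one_gt_d9; linarith
        have h3 : (2.7:ℝ)^5 ≤ (Real.exp 1)^5 :=
          pow_le_pow_left₀ (by norm_num) (le_of_lt h2) 5
        have h4 : (143:ℝ) ≤ (2.7:ℝ)^5 := by norm_num
        rw [h1]; linarith
      have h60 : (1:ℝ) ≤ Real.exp 60 := by
        have := Real.add_one_le_exp (60:ℝ); linarith
      have hEE : (0:ℝ) ≤ Real.exp 60 * Real.exp 60 := by positivity
      have h7 : 7 * (Real.exp 60 * Real.exp 60) ≤ Real.exp 125 := by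
        rw [hkey2, he120]
        nlinarith
      have hA : L/(4*X) ≤ Real.exp 60 * Real.exp 60 := by nlinarith
      linarith
    calc (M:ℝ) * (M:ℝ)^k = M * Real.exp ((k:ℝ) * Real.log M) := by rw [hMk]
      _ ≤ Real.exp (Real.exp 125) * M * Real.exp (-L/(4*X)) := by
          rw [mul_comm (Real.exp (Real.exp 125)) (M:ℝ), mul_assoc, ← Real.exp_add]
          apply mul_le_mul_of_nonneg_left _ (le_of_lt hMpos)
          apply Real.exp_le_exp.mpr
          have : -L/(4*X) = -(L/(4*X)) := by ring
          rw [this]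
          linarith
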